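/- In the elementary abelian setting, Σ_{k=0}^{p^n − 1} Γ_k(m) = (2m − 1)(g_F + p^n − 1), where Γ_k(m) = Σ_{i=1}^r ⌊(m(p^n−1)(Φ(i)+1) − kΦ(i))/p^n⌋ and g_F = ((p^n−1)/2)(−2 + Σ_i (Φ(i)+1)). -/

import Mathlib

lemma gauss_rat (q : ℕ) : ∑ k ∈ Finset.range q, (k : ℚ) = (q : ℚ) * ((q : ℚ) - 1) / 2 := by
  induction q with
  | zero => simp
  | succ t ih =>
    rw [Finset.sum_range_succ, ih]
    push_cast
    ring

/-- Sum of residues of an arithmetic progression with common difference coprime to `q`. -/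
lemma emod_sum_eq (q : ℕ) (hq : 0 < q) (c A : ℤ) (hc : Int.gcd c q = 1) :
    ∑ k ∈ Finset.range q, (A - (k : ℤ) * c) % (q : ℤ) = ∑ k ∈ Finset.range q, (k : ℤ) := by
  set f : ℕ → ℕ := fun k => ((A - (k : ℤ) * c) % (q : ℤ)).toNat with hf
  have hqz : (0 : ℤ) < (q : ℤ) := by exact_mod_cast hq
  have hmod : ∀ k, ((f k : ℤ)) = (A - (k : ℤ) * c) % (q : ℤ) := by
    intro k
    exact Int.toNat_of_nonneg (Int.emod_nonneg _ (ne_of_gt hqz))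
  have hmem : ∀ k ∈ Finset.range q, f k ∈ Finset.range q := by
    intro k _
    have h1 : (A - (k : ℤ) * c) % (q : ℤ) < q := Int.emod_lt_of_pos _ hqz
    have := hmod k
    simp only [Finset.mem_range]
    omega
  have hinj : ∀ k1 ∈ Finset.range q, ∀ k2 ∈ Finset.range q, f k1 = f k2 → k1 = k2 := by
    intro k1 hk1 k2 hk2 h
    have he : (A - (k1 : ℤ) * c) % (q : ℤ) = (A - (k2 : ℤ) * c) % (q : ℤ) := by
      rw [← hmod k1, ← hmod k2, h]
    have hmeq : (A - (k1 : ℤ) * c) ≡ (A - (k2 : ℤ) * c) [ZMOD (q : ℤ)] := he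
    have h2 : ((k2 : ℤ) * c) ≡ ((k1 : ℤ) * c) [ZMOD (q : ℤ)] := by
      have := (Int.ModEq.add_right ((k1 : ℤ) * c + (k2 : ℤ) * c) hmeq)
      have h3 : A - (k1 : ℤ) * c + ((k1 : ℤ) * c + (k2 : ℤ) * c)
          = A + (k2 : ℤ) * c := by ring
      have h4 : A - (k2 : ℤ) * c + ((k1 : ℤ) * c + (k2 : ℤ) * c)
          = A + (k1 : ℤ) * c := by ring
      rw [h3, h4] at this
      exact Int.ModEq.add_left_cancel' A this
    have hc' : Int.gcd (q : ℤ) c = 1 := by rw [Int.gcd_comm]; exact hc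
    have h5 : (k2 : ℤ) ≡ (k1 : ℤ) [ZMOD (q : ℤ)] := by
      simpa [hc'] using h2.cancel_right_div_gcd hqz
    have h6 : (k2 : ℤ) % (q : ℤ) = (k1 : ℤ) % (q : ℤ) := h5
    rw [Int.emod_eq_of_lt (by positivity) (by exact_mod_cast Finset.mem_range.mp hk2),
        Int.emod_eq_of_lt (by positivity) (by exact_mod_cast Finset.mem_range.mp hk1)] at h6
    exact_mod_cast h6.symm
  have himg : (Finset.range q).image f = Finset.range q := by
    apply Finset.eq_of_subset_of_card_le
    · intro j hj
      obtain ⟨k, hk, rfl⟩ := Finset.mem_image.mp hj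
      exact hmem k hk
    · rw [Finset.card_image_of_injOn (fun a ha b hb => hinj a ha b hb)]
  calc ∑ k ∈ Finset.range q, (A - (k : ℤ) * c) % (q : ℤ)
      = ∑ k ∈ Finset.range q, ((f k : ℕ) : ℤ) := by
        refine Finset.sum_congr rfl fun k _ => (hmod k).symm
    _ = ∑ j ∈ (Finset.range q).image f, (j : ℤ) := by
        rw [Finset.sum_image (fun a ha b hb => hinj a ha b hb)]
    _ = ∑ k ∈ Finset.range q, (k : ℤ) := by rw [himg]

lemma key_sum (q : ℕ) (hq : 0 < q) (c A : ℤ) (hc : Int.gcd c q = 1) :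
    ((∑ k ∈ Finset.range q, (A - (k : ℤ) * c) / (q : ℤ) : ℤ) : ℚ)
      = (A : ℚ) - ((c : ℚ) + 1) * ((q : ℚ) - 1) / 2 := by
  have hqz : (0 : ℤ) < (q : ℤ) := by exact_mod_cast hq
  have hdiv : ∀ k : ℕ, (q : ℤ) * ((A - (k : ℤ) * c) / (q : ℤ))
      = (A - (k : ℤ) * c) - (A - (k : ℤ) * c) % (q : ℤ) := by
    intro k
    have := Int.emod_add_mul_ediv (A - (k : ℤ) * c) (q : ℤ)
    omega
  have hmul : (q : ℤ) * (∑ k ∈ Finset.range q, (A - (k : ℤ) * c) / (q : ℤ))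
      = ∑ k ∈ Finset.range q, ((A - (k : ℤ) * c) - (A - (k : ℤ) * c) % (q : ℤ)) := by
    rw [Finset.mul_sum]
    exact Finset.sum_congr rfl fun k _ => hdiv k
  rw [Finset.sum_sub_distrib, emod_sum_eq q hq c A hc, Finset.sum_sub_distrib,
    Finset.sum_const, Finset.card_range] at hmul
  simp only [nsmul_eq_mul] at hmul
  have hmulQ : (q : ℚ) * ((∑ k ∈ Finset.range q, (A - (k : ℤ) * c) / (q : ℤ) : ℤ) : ℚ)
      = (q : ℚ) * (A : ℚ) - (∑ k ∈ Finset.range q, (k : ℚ)) * (c : ℚ)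
        - ∑ k ∈ Finset.range q, (k : ℚ) := by
    have h := congrArg (fun z : ℤ => (z : ℚ)) hmul
    push_cast at h ⊢
    rw [Finset.sum_mul]
    linarith [h]
  rw [gauss_rat] at hmulQ
  have hQne : (q : ℚ) ≠ 0 := by positivity
  have h2 : (q : ℚ) * ((∑ k ∈ Finset.range q, (A - (k : ℤ) * c) / (q : ℤ) : ℤ) : ℚ)
      = (q : ℚ) * ((A : ℚ) - ((c : ℚ) + 1) * ((q : ℚ) - 1) / 2) := by
    linear_combination hmulQ
  exact mul_left_cancel₀ hQne h2

/-- In the elementary abelian setting, `Σ_{k=0}^{p^n-1} Γ_k(m) = (2m-1)(g_F + p^n - 1)`,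
where `Γ_k(m) = Σ_{i=1}^r ⌊(m(p^n-1)(Φ(i)+1) - kΦ(i))/p^n⌋` and
`g_F = ((p^n-1)/2)(-2 + Σ_i (Φ(i)+1))`. -/
theorem boseck_sum_eq_genus_formula
    (p n r m : ℕ) (hp : p.Prime) (hn : 1 ≤ n) (hr : 1 ≤ r) (hm : 1 ≤ m)
    (Φ : Fin r → ℕ) (hΦpos : ∀ i, 1 ≤ Φ i) (hΦcop : ∀ i, Nat.Coprime (Φ i) p)
    (gF : ℚ)
    (hgF : gF = (((p : ℚ) ^ n - 1) / 2) * (-2 + ∑ i, ((Φ i : ℚ) + 1))) :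
    ∑ k ∈ Finset.range (p ^ n), ∑ i,
        (⌊(((m : ℤ) * ((p : ℤ) ^ n - 1) * ((Φ i : ℤ) + 1) - (k : ℤ) * (Φ i : ℤ) : ℤ) : ℚ)
          / (p : ℚ) ^ n⌋ : ℚ)
      = (2 * (m : ℚ) - 1) * (gF + (p : ℚ) ^ n - 1) := by
  set q : ℕ := p ^ n with hqdef
  have hq : 0 < q := pow_pos hp.pos n
  have hpQ : (p : ℚ) ^ n = (q : ℚ) := by push_cast [hqdef]; ring
  have hpZ : (p : ℤ) ^ n = (q : ℤ) := by push_cast [hqdef]; ring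
  rw [Finset.sum_comm]
  have hterm : ∀ i : Fin r,
      ∑ k ∈ Finset.range q,
        (⌊(((m : ℤ) * ((p : ℤ) ^ n - 1) * ((Φ i : ℤ) + 1) - (k : ℤ) * (Φ i : ℤ) : ℤ) : ℚ)
          / (p : ℚ) ^ n⌋ : ℚ)
      = ((m : ℚ) * ((q : ℚ) - 1) * ((Φ i : ℚ) + 1))
          - ((Φ i : ℚ) + 1) * ((q : ℚ) - 1) / 2 := by
    intro i
    have hc : Int.gcd ((Φ i : ℤ)) (q : ℤ) = 1 := by
      rw [Int.gcd_natCast_natCast]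
      exact Nat.Coprime.pow_right n (hΦcop i)
    have hfl : ∀ k : ℕ,
        ⌊(((m : ℤ) * ((p : ℤ) ^ n - 1) * ((Φ i : ℤ) + 1) - (k : ℤ) * (Φ i : ℤ) : ℤ) : ℚ)
          / (p : ℚ) ^ n⌋
        = ((m : ℤ) * ((q : ℤ) - 1) * ((Φ i : ℤ) + 1) - (k : ℤ) * (Φ i : ℤ)) / (q : ℤ) := by
      intro k
      rw [hpZ, hpQ]
      exact Rat.floor_intCast_div_natCast _ _
    have : ∑ k ∈ Finset.range q,
        (⌊(((m : ℤ) * ((p : ℤ) ^ n - 1) * ((Φ i : ℤ) + 1) - (k : ℤ) * (Φ i : ℤ) : ℤ) : ℚ)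
          / (p : ℚ) ^ n⌋ : ℚ)
        = ((∑ k ∈ Finset.range q,
            ((m : ℤ) * ((q : ℤ) - 1) * ((Φ i : ℤ) + 1) - (k : ℤ) * (Φ i : ℤ)) / (q : ℤ) : ℤ) : ℚ) := by
      rw [Finset.sum_congr rfl fun k _ => by rw [hfl k]]
      push_cast
      ring
    rw [this, key_sum q hq _ _ hc]
    push_cast
    ring
  rw [Finset.sum_congr rfl fun i _ => hterm i, hgF, hpQ]
  have hre : ∀ i : Fin r,
      ((m : ℚ) * ((q : ℚ) - 1) * ((Φ i : ℚ) + 1))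
          - ((Φ i : ℚ) + 1) * ((q : ℚ) - 1) / 2
      = ((Φ i : ℚ) + 1) * ((m : ℚ) * ((q : ℚ) - 1) - ((q : ℚ) - 1) / 2) :=
    fun i => by ring
  rw [Finset.sum_congr rfl fun i _ => hre i, ← Finset.sum_mul]
  ring
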